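/- Let K be a field and L the free Lie algebra on distinct generators a₁, a₂ over K. For α, β, γ ∈ K, the equation ⁅α • ι(a₁), β • ι(a₂)⁆ = ⁅γ • ι(a₁), ι(a₂)⁆ holds in L if and only if α·β = γ in K. -/

import Mathlib

open Matrix in
theorem scalar_multiplication_encoding {K : Type*} [Field K] {X : Type*} (a₁ a₂ : X)
    (ha : a₁ ≠ a₂) (α β γ : K) :
    ⁅α • FreeLieAlgebra.of K a₁, β • FreeLieAlgebra.of K a₂⁆ =
        ⁅γ • FreeLieAlgebra.of K a₁, FreeLieAlgebra.of K a₂⁆ ↔ α * β = γ := by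
  classical
  constructor
  · intro h
    set M := Matrix (Fin 2) (Fin 2) K
    let f : X → M := fun x => if x = a₁ then Matrix.single 0 1 1 else Matrix.single 1 0 1
    letI : LieRing M := LieRing.ofAssociativeRing
    let F := FreeLieAlgebra.lift K (L := M) f
    have hF := congrArg F h
    have h1 : F (FreeLieAlgebra.of K a₁) = Matrix.single 0 1 1 := by
      simp [F, f, FreeLieAlgebra.lift_of_apply]
    have h2 : F (FreeLieAlgebra.of K a₂) = Matrix.single 1 0 1 := by
      simp [F, f, FreeLieAlgebra.lift_of_apply, ha.symm]
    simp only [LieHom.map_lie, map_smul, h1, h2] at hF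
    have hb : ⁅(Matrix.single 0 1 1 : M), (Matrix.single 1 0 1 : M)⁆ ≠ 0 := by
      intro hz
      have := congrFun (congrFun hz 0) 0
      simp [Ring.lie_def, Matrix.mul_apply, Matrix.single, Matrix.sub_apply,
        Matrix.of_apply, Matrix.zero_apply, Fin.sum_univ_two] at this
    rw [smul_lie, lie_smul β, smul_smul, smul_lie] at hF
    exact smul_left_injective K hb hF
  · intro h
    rw [smul_lie, lie_smul β, smul_smul, h, smul_lie]
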